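/- The 3-player WLC game G* with C_i = {a_i, b_i} and W = {(a_1,a_2,a_3), (a_1,a_2,b_3), (a_1,b_2,b_3), (b_1,b_2,b_3)} is IOC-solvable but not BCR-solvable: a_1 is the unique optimal choice of player 1, b_3 is the unique optimal choice of player 3, player 2 has no optimal choice, every profile in which players 1 and 3 play a_1 and b_3 is winning, and no player has a surely winning or surely losing choice. -/

import Mathlib

open Classical

/-- An `n`-player win-lose coordination (WLC) game: a finite domain of choices,
nonempty pairwise disjoint choice sets `C i` for the players, and a winning
relation `W` consisting of choice profiles. -/
structure WLC (n : ℕ) where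
  A : Type
  finA : Finite A
  C : Fin n → Set A
  C_nonempty : ∀ i, (C i).Nonempty
  C_disjoint : ∀ i j, i ≠ j → Disjoint (C i) (C j)
  W : Set (Fin n → A)
  W_sub : ∀ σ ∈ W, ∀ i, σ i ∈ C i

namespace WLC

variable {n : ℕ}

/-- `σ` is a choice profile w.r.t. the choice sets `Cs`. -/
def IsProfileOn {A : Type} (Cs : Fin n → Set A) (σ : Fin n → A) : Prop :=
  ∀ i, σ i ∈ Cs i

/-- `c` is a surely winning choice of player `i` w.r.t. choice sets `Cs`
and winning relation `W`. -/
def SWinOn {A : Type} (Cs : Fin n → Set A) (W : Set (Fin n → A)) (i : Fin n) (c : A) : Prop :=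
  c ∈ Cs i ∧ ∀ σ, IsProfileOn Cs σ → σ i = c → σ ∈ W

/-- `c` is a surely losing choice of player `i` w.r.t. choice sets `Cs`
and winning relation `W`. -/
def SLoseOn {A : Type} (Cs : Fin n → Set A) (W : Set (Fin n → A)) (i : Fin n) (c : A) : Prop :=
  c ∈ Cs i ∧ ∀ σ, IsProfileOn Cs σ → σ i = c → σ ∉ W

def IsProfile (G : WLC n) (σ : Fin n → G.A) : Prop := IsProfileOn G.C σ

def SurelyWinning (G : WLC n) (i : Fin n) (c : G.A) : Prop := SWinOn G.C G.W i c

def SurelyLosing (G : WLC n) (i : Fin n) (c : G.A) : Prop := SLoseOn G.C G.W i c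

/-- The winning extension of the choice `c` of player `i`: the (sets of) tuples of
choices of the other players that complete `c` to a winning profile.  (Technically we
use full profiles whose `i`-th coordinate is irrelevant, replacing it by `c`.) -/
def winExtOn {A : Type} (Cs : Fin n → Set A) (W : Set (Fin n → A)) (i : Fin n) (c : A) :
    Set (Fin n → A) :=
  {σ | (∀ j, j ≠ i → σ j ∈ Cs j) ∧ Function.update σ i c ∈ W}

def winExt (G : WLC n) (i : Fin n) (c : G.A) : Set (Fin n → G.A) := winExtOn G.C G.W i c

end WLC

namespace WLC

variable {n : ℕ}

/-- The set of non-surely-losing choices of player `i`. -/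
def nonLosing (G : WLC n) (i : Fin n) : Set G.A :=
  {c ∈ G.C i | ¬ SurelyLosing G i c}

/-- `c` is an optimal choice of player `i`: it is at least as good as every choice of
`i`, i.e. its winning extension contains the winning extension of every choice of `i`. -/
def Optimal (G : WLC n) (i : Fin n) (c : G.A) : Prop :=
  c ∈ G.C i ∧ ∀ c' ∈ G.C i, winExt G i c' ⊆ winExt G i c

/-- The BCR-prescribed choices: in the game restricted to non-surely-losing choices,
play a surely winning choice when one exists, else any (non-surely-losing) choice. -/
noncomputable def BCRset (G : WLC n) (i : Fin n) : Set G.A :=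
  if ∃ c, SWinOn (nonLosing G) G.W i c then {c | SWinOn (nonLosing G) G.W i c}
  else nonLosing G i

/-- `G` is BCR-solvable: after removing all surely losing choices of every player,
some player has a surely winning choice, and the BCR-prescribed profiles are winning. -/
noncomputable def BCRSolvable (G : WLC n) : Prop :=
  (∃ i c, SWinOn (nonLosing G) G.W i c) ∧
  ∀ σ, (∀ i, σ i ∈ BCRset G i) → σ ∈ G.W

/-- The BIR⁺-prescribed choices: an optimal non-surely-losing choice when one exists,
else a non-surely-losing choice when one exists, else any choice. -/
noncomputable def BIRplusSet (G : WLC n) (i : Fin n) : Set G.A :=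
  if ∃ c, Optimal G i c ∧ ¬ SurelyLosing G i c then
    {c | Optimal G i c ∧ ¬ SurelyLosing G i c}
  else if ∃ c ∈ G.C i, ¬ SurelyLosing G i c then nonLosing G i
  else G.C i

/-- `G` is BIR⁺-solvable: every profile in which each player plays an optimal
non-surely-losing choice when possible (else merely a non-surely-losing choice)
is winning. -/
noncomputable def BIRplusSolvable (G : WLC n) : Prop :=
  ∀ σ, (∀ i, σ i ∈ BIRplusSet G i) → σ ∈ G.W

/-- `G` is IOC-solvable: every profile in which each player who has an optimal choice
plays one (players without optimal choices playing arbitrarily) is winning. -/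
def IOCSolvable (G : WLC n) : Prop :=
  ∀ σ, G.IsProfile σ →
    (∀ i, (∃ c, Optimal G i c) → Optimal G i (σ i)) → σ ∈ G.W

end WLC

open WLC

/-- The 3-player game `G*`: choices `aᵢ = (i,0)`, `bᵢ = (i,1)`;
`W = {(a₁,a₂,a₃), (a₁,a₂,b₃), (a₁,b₂,b₃), (b₁,b₂,b₃)}`. -/
def Gstar : WLC 3 where
  A := Fin 3 × Fin 2
  finA := inferInstance
  C := fun i => {a | a.1 = i}
  C_nonempty := fun i => ⟨(i, 0), rfl⟩
  C_disjoint := fun i j h => Set.disjoint_left.mpr fun a ha hb => h (ha.symm.trans hb)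
  W := {σ | (σ 0 = (0,0) ∧ σ 1 = (1,0) ∧ σ 2 = (2,0)) ∨
            (σ 0 = (0,0) ∧ σ 1 = (1,0) ∧ σ 2 = (2,1)) ∨
            (σ 0 = (0,0) ∧ σ 1 = (1,1) ∧ σ 2 = (2,1)) ∨
            (σ 0 = (0,1) ∧ σ 1 = (1,1) ∧ σ 2 = (2,1))}
  W_sub := by
    rintro σ (⟨h0, h1, h2⟩ | ⟨h0, h1, h2⟩ | ⟨h0, h1, h2⟩ | ⟨h0, h1, h2⟩) i <;>
      fin_cases i <;> simp [Set.mem_setOf_eq, h0, h1, h2]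


-- Auxiliary lemmas

lemma Gstar_C_cases {i : Fin 3} {c : Fin 3 × Fin 2} (h : c ∈ Gstar.C i) :
    c = (i, 0) ∨ c = (i, 1) := by
  obtain ⟨x, y⟩ := c
  simp only [Gstar, Set.mem_setOf_eq] at h
  subst h
  fin_cases y <;> simp

lemma Gstar_mem_W (σ : Fin 3 → Gstar.A) : σ ∈ Gstar.W ↔
    (@Eq (Fin 3 × Fin 2) (σ 0) (0,0) ∧ @Eq (Fin 3 × Fin 2) (σ 1) (1,0) ∧ @Eq (Fin 3 × Fin 2) (σ 2) (2,0)) ∨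
    (@Eq (Fin 3 × Fin 2) (σ 0) (0,0) ∧ @Eq (Fin 3 × Fin 2) (σ 1) (1,0) ∧ @Eq (Fin 3 × Fin 2) (σ 2) (2,1)) ∨
    (@Eq (Fin 3 × Fin 2) (σ 0) (0,0) ∧ @Eq (Fin 3 × Fin 2) (σ 1) (1,1) ∧ @Eq (Fin 3 × Fin 2) (σ 2) (2,1)) ∨
    (@Eq (Fin 3 × Fin 2) (σ 0) (0,1) ∧ @Eq (Fin 3 × Fin 2) (σ 1) (1,1) ∧ @Eq (Fin 3 × Fin 2) (σ 2) (2,1)) :=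
  Iff.rfl

lemma Gstar_mem_W' (σ : Fin 3 → Fin 3 × Fin 2) :
    @Membership.mem (Fin 3 → Gstar.A) (Set (Fin 3 → Gstar.A)) _ Gstar.W σ ↔
    (@Eq (Fin 3 × Fin 2) (σ 0) (0,0) ∧ @Eq (Fin 3 × Fin 2) (σ 1) (1,0) ∧ @Eq (Fin 3 × Fin 2) (σ 2) (2,0)) ∨
    (@Eq (Fin 3 × Fin 2) (σ 0) (0,0) ∧ @Eq (Fin 3 × Fin 2) (σ 1) (1,0) ∧ @Eq (Fin 3 × Fin 2) (σ 2) (2,1)) ∨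
    (@Eq (Fin 3 × Fin 2) (σ 0) (0,0) ∧ @Eq (Fin 3 × Fin 2) (σ 1) (1,1) ∧ @Eq (Fin 3 × Fin 2) (σ 2) (2,1)) ∨
    (@Eq (Fin 3 × Fin 2) (σ 0) (0,1) ∧ @Eq (Fin 3 × Fin 2) (σ 1) (1,1) ∧ @Eq (Fin 3 × Fin 2) (σ 2) (2,1)) :=
  Iff.rfl

lemma Gstar_opt0 : Optimal Gstar 0 (0,0) := by
  refine ⟨rfl, fun c' hc' σ hσ => ?_⟩
  rcases Gstar_C_cases hc' with rfl | rfl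
  · exact hσ
  · obtain ⟨hC, hW⟩ := hσ
    refine ⟨hC, ?_⟩
    simp only [Gstar_mem_W, Gstar_mem_W', Function.update] at hW ⊢
    simp_all

lemma Gstar_opt2 : Optimal Gstar 2 (2,1) := by
  refine ⟨rfl, fun c' hc' σ hσ => ?_⟩
  rcases Gstar_C_cases hc' with rfl | rfl
  · obtain ⟨hC, hW⟩ := hσ
    refine ⟨hC, ?_⟩
    simp only [Gstar_mem_W, Gstar_mem_W', Function.update] at hW ⊢
    simp_all
  · exact hσ

lemma Gstar_uniq0 : ∀ c, Optimal Gstar 0 c → c = (0,0) := by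
  intro c hc
  rcases Gstar_C_cases hc.1 with rfl | rfl
  · rfl
  · exfalso
    have h := hc.2 ((0,0)) rfl (show (![(0,0),(1,0),(2,0)] : Fin 3 → Fin 3 × Fin 2) ∈ winExt Gstar 0 ((0,0)) from
      ⟨fun j _ => by fin_cases j <;> rfl, by simp [Gstar_mem_W, Gstar_mem_W', Function.update]⟩)
    have h2 := h.2
    simp [Gstar_mem_W, Gstar_mem_W', Function.update, Prod.ext_iff, Fin.ext_iff] at h2

lemma Gstar_uniq2 : ∀ c, Optimal Gstar 2 c → c = (2,1) := by
  intro c hc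
  rcases Gstar_C_cases hc.1 with rfl | rfl
  · exfalso
    have h := hc.2 ((2,1)) rfl (show (![(0,1),(1,1),(2,1)] : Fin 3 → Fin 3 × Fin 2) ∈ winExt Gstar 2 ((2,1)) from
      ⟨fun j _ => by fin_cases j <;> rfl, by simp [Gstar_mem_W, Gstar_mem_W', Function.update]⟩)
    have h2 := h.2
    simp [Gstar_mem_W, Gstar_mem_W', Function.update, Prod.ext_iff, Fin.ext_iff] at h2
  · rfl

lemma Gstar_noopt1 : ¬ ∃ c, Optimal Gstar 1 c := by
  rintro ⟨c, hc⟩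
  rcases Gstar_C_cases hc.1 with rfl | rfl
  ·
    have h := hc.2 ((1,1)) rfl (show (![(0,1),(1,1),(2,1)] : Fin 3 → Fin 3 × Fin 2) ∈ winExt Gstar 1 ((1,1)) from
      ⟨fun j _ => by fin_cases j <;> rfl, by simp [Gstar_mem_W, Gstar_mem_W', Function.update]⟩)
    have h2 := h.2
    simp [Gstar_mem_W, Gstar_mem_W', Function.update, Prod.ext_iff, Fin.ext_iff] at h2
  ·
    have h := hc.2 ((1,0)) rfl (show (![(0,0),(1,0),(2,0)] : Fin 3 → Fin 3 × Fin 2) ∈ winExt Gstar 1 ((1,0)) from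
      ⟨fun j _ => by fin_cases j <;> rfl, by simp [Gstar_mem_W, Gstar_mem_W', Function.update]⟩)
    have h2 := h.2
    simp [Gstar_mem_W, Gstar_mem_W', Function.update, Prod.ext_iff, Fin.ext_iff] at h2

lemma Gstar_win06 : ∀ σ, Gstar.IsProfile σ → σ 0 = (0,0) → σ 2 = (2,1) → σ ∈ Gstar.W := by
  intro σ hσ h0 h2
  rcases Gstar_C_cases (hσ 1) with h1 | h1 <;> simp [Gstar_mem_W, Gstar_mem_W', h0, h1, h2]

lemma Gstar_noSWSL : ∀ i c, c ∈ Gstar.C i →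
    ¬ SurelyWinning Gstar i c ∧ ¬ SurelyLosing Gstar i c := by
  intro i c hc
  fin_cases i <;> rcases Gstar_C_cases hc with rfl | rfl
  · -- (0,0)
    constructor
    · rintro ⟨-, h⟩
      have := h (![(0,0),(1,1),(2,0)] : Fin 3 → Fin 3 × Fin 2) (fun j => by fin_cases j <;> rfl) rfl
      simp [Gstar_mem_W, Gstar_mem_W', Prod.ext_iff, Fin.ext_iff] at this
    · rintro ⟨-, h⟩
      exact h (![(0,0),(1,0),(2,0)] : Fin 3 → Fin 3 × Fin 2) (fun j => by fin_cases j <;> rfl) rfl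
        (by simp [Gstar_mem_W, Gstar_mem_W'])
  · -- (0,1)
    constructor
    · rintro ⟨-, h⟩
      have := h (![(0,1),(1,0),(2,0)] : Fin 3 → Fin 3 × Fin 2) (fun j => by fin_cases j <;> rfl) rfl
      simp [Gstar_mem_W, Gstar_mem_W', Prod.ext_iff, Fin.ext_iff] at this
    · rintro ⟨-, h⟩
      exact h (![(0,1),(1,1),(2,1)] : Fin 3 → Fin 3 × Fin 2) (fun j => by fin_cases j <;> rfl) rfl
        (by simp [Gstar_mem_W, Gstar_mem_W'])
  · -- (1,0)
    constructor
    · rintro ⟨-, h⟩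
      have := h (![(0,1),(1,0),(2,0)] : Fin 3 → Fin 3 × Fin 2) (fun j => by fin_cases j <;> rfl) rfl
      simp [Gstar_mem_W, Gstar_mem_W', Prod.ext_iff, Fin.ext_iff] at this
    · rintro ⟨-, h⟩
      exact h (![(0,0),(1,0),(2,0)] : Fin 3 → Fin 3 × Fin 2) (fun j => by fin_cases j <;> rfl) rfl
        (by simp [Gstar_mem_W, Gstar_mem_W'])
  · -- (1,1)
    constructor
    · rintro ⟨-, h⟩
      have := h (![(0,0),(1,1),(2,0)] : Fin 3 → Fin 3 × Fin 2) (fun j => by fin_cases j <;> rfl) rfl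
      simp [Gstar_mem_W, Gstar_mem_W', Prod.ext_iff, Fin.ext_iff] at this
    · rintro ⟨-, h⟩
      exact h (![(0,0),(1,1),(2,1)] : Fin 3 → Fin 3 × Fin 2) (fun j => by fin_cases j <;> rfl) rfl
        (by simp [Gstar_mem_W, Gstar_mem_W'])
  · -- (2,0)
    constructor
    · rintro ⟨-, h⟩
      have := h (![(0,1),(1,0),(2,0)] : Fin 3 → Fin 3 × Fin 2) (fun j => by fin_cases j <;> rfl) rfl
      simp [Gstar_mem_W, Gstar_mem_W', Prod.ext_iff, Fin.ext_iff] at this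
    · rintro ⟨-, h⟩
      exact h (![(0,0),(1,0),(2,0)] : Fin 3 → Fin 3 × Fin 2) (fun j => by fin_cases j <;> rfl) rfl
        (by simp [Gstar_mem_W, Gstar_mem_W'])
  · -- (2,1)
    constructor
    · rintro ⟨-, h⟩
      have := h (![(0,1),(1,0),(2,1)] : Fin 3 → Fin 3 × Fin 2) (fun j => by fin_cases j <;> rfl) rfl
      simp [Gstar_mem_W, Gstar_mem_W', Prod.ext_iff, Fin.ext_iff] at this
    · rintro ⟨-, h⟩
      exact h (![(0,0),(1,0),(2,1)] : Fin 3 → Fin 3 × Fin 2) (fun j => by fin_cases j <;> rfl) rfl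
        (by simp [Gstar_mem_W, Gstar_mem_W'])

lemma Gstar_nonLosing : nonLosing Gstar = Gstar.C := by
  funext i
  ext c
  exact ⟨fun h => h.1, fun h => ⟨h, (Gstar_noSWSL i c h).2⟩⟩

/-- In `G*`, `a₁` is the unique optimal choice of player `1` (index `0`),
`b₃` is the unique optimal choice of player `3` (index `2`), player `2` (index `1`) has
no optimal choice, every profile in which players `1` and `3` play `a₁` and `b₃` is
winning, no player has a surely winning or a surely losing choice; hence `G*` is
IOC-solvable but not BCR-solvable. -/
theorem Gstar_ioc_solvable_not_bcr_solvable :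
    Optimal Gstar 0 (0,0) ∧ (∀ c, Optimal Gstar 0 c → c = (0,0)) ∧
    Optimal Gstar 2 (2,1) ∧ (∀ c, Optimal Gstar 2 c → c = (2,1)) ∧
    (¬ ∃ c, Optimal Gstar 1 c) ∧
    (∀ σ, Gstar.IsProfile σ → σ 0 = (0,0) → σ 2 = (2,1) → σ ∈ Gstar.W) ∧
    (∀ i c, c ∈ Gstar.C i → ¬ SurelyWinning Gstar i c ∧ ¬ SurelyLosing Gstar i c) ∧
    IOCSolvable Gstar ∧ ¬ BCRSolvable Gstar := by
  refine ⟨Gstar_opt0, Gstar_uniq0, Gstar_opt2, Gstar_uniq2, Gstar_noopt1, Gstar_win06,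
    Gstar_noSWSL, ?_, ?_⟩
  · intro σ hσ hopt
    exact Gstar_win06 σ hσ
      (Gstar_uniq0 _ (hopt 0 ⟨_, Gstar_opt0⟩))
      (Gstar_uniq2 _ (hopt 2 ⟨_, Gstar_opt2⟩))
  · rintro ⟨⟨i, c, hc⟩, -⟩
    rw [Gstar_nonLosing] at hc
    exact (Gstar_noSWSL i c hc.1).1 hc
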